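/- Let $M$ be a connected CW-complex with fundamental group $\Gamma$ and finite 3-skeleton, and let $\Lambda = \mathbb{Z}\Gamma$. Then $\pi_2(M)$ is finitely generated as a $\Lambda$-module if and only if $\Gamma$ is of type $FP_3$. -/

import Mathlib

open MonoidAlgebra

/-- The integral group ring `Λ = ℤΓ`. -/
abbrev GrpRing (Γ : Type) [Group Γ] := MonoidAlgebra ℤ Γ

/-- A projective resolution of the trivial `ℤΓ`-module `ℤ`:
`⋯ → P₁ → P₀ → ℤ → 0` with all `P i` projective. -/
structure ProjResolution (Γ : Type) [Group Γ] where
  P : ℕ → Type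
  [acg : ∀ i, AddCommGroup (P i)]
  [mod : ∀ i, Module (GrpRing Γ) (P i)]
  dP : ∀ i, P (i + 1) →ₗ[GrpRing Γ] P i
  aug : P 0 →+ ℤ
  proj : ∀ i, Module.Projective (GrpRing Γ) (P i)
  aug_equivariant : ∀ (g : Γ) (x : P 0), aug ((single g (1 : ℤ) : GrpRing Γ) • x) = aug x
  aug_surjective : Function.Surjective aug
  exact_aug : ∀ x : P 0, aug x = 0 ↔ x ∈ LinearMap.range (dP 0)
  exact : ∀ i, LinearMap.ker (dP i) = LinearMap.range (dP (i + 1))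

attribute [instance] ProjResolution.acg ProjResolution.mod

/-- A group `Γ` is of type `FP₃` if the trivial module `ℤ` has a projective resolution
over `ℤΓ` which is finitely generated in degrees `≤ 3`. -/
def IsFP3 (Γ : Type) [Group Γ] : Prop :=
  ∃ Pres : ProjResolution Γ, ∀ i ≤ 3, Module.Finite (GrpRing Γ) (Pres.P i)

/-- A group `Γ` is of type `FP` if the trivial module `ℤ` has a finite length projective
resolution over `ℤΓ` by finitely generated modules. -/
def IsFP (Γ : Type) [Group Γ] : Prop :=
  ∃ Pres : ProjResolution Γ, (∀ i, Module.Finite (GrpRing Γ) (Pres.P i)) ∧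
    ∃ N, ∀ i, N ≤ i → Subsingleton (Pres.P i)

/-- **(Bieri–Eckmann.)**  A group `Γ` is an `r`-dimensional duality group if it is of type
`FP` and `H^i(Γ, ℤΓ) = 0` for all `i ≠ r`. -/
noncomputable def IsDualityGroup (Γ : Type) [Group Γ] (r : ℕ) : Prop :=
  IsFP Γ ∧ ∀ i, i ≠ r → Subsingleton (groupCohomology (Rep.leftRegular ℤ Γ) i)

section ChainModel

variable (Γ : Type) [Group Γ]
variable (C : ℕ → Type) [∀ i, AddCommGroup (C i)] [∀ i, Module (GrpRing Γ) (C i)]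
variable (d : ∀ i, C (i + 1) →ₗ[GrpRing Γ] C i)

/-- `π₂(M) = H₂(M̃) = H₂(C)`, as a left `ℤΓ`-module. -/
noncomputable def pi2Model :=
  LinearMap.ker (d 1) ⧸
    (Submodule.comap (LinearMap.ker (d 1)).subtype (LinearMap.range (d 2)))

noncomputable instance : AddCommGroup (pi2Model Γ C d) := by
  unfold pi2Model; infer_instance

noncomputable instance : Module (GrpRing Γ) (pi2Model Γ C d) := by
  unfold pi2Model; infer_instance

end ChainModel

/-! ### Auxiliary material: Schanuel's lemma -/

noncomputable section Schanuel
variable {R : Type} [Ring R]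
variable {X B : Type} [AddCommGroup X] [Module R X] [AddCommGroup B] [Module R B]

/-- A split surjection gives a product decomposition. -/
noncomputable def splitEquiv (π : X →ₗ[R] B) (s : B →ₗ[R] X) (h : π.comp s = LinearMap.id) :
    X ≃ₗ[R] (↥(LinearMap.ker π) × B) where
  toFun x := (⟨x - s (π x), by
      have : π (s (π x)) = π x := congrArg (fun f => f (π x)) (congrArg DFunLike.coe h)
      simp [LinearMap.mem_ker, this]⟩, π x)
  invFun p := p.1.val + s p.2
  map_add' x y := by ext <;> simp [add_sub_add_comm]
  map_smul' r x := by ext <;> simp [smul_sub]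
  left_inv x := by simp
  right_inv p := by
    have hp : π p.1.val = 0 := p.1.2
    have hs : π (s p.2) = p.2 := congrArg (fun f => f p.2) (congrArg DFunLike.coe h)
    ext
    · simp [hp, hs]
    · simp [hp, hs]

variable {A M : Type} [AddCommGroup A] [Module R A] [AddCommGroup M] [Module R M]

/-- Schanuel's lemma. -/
theorem schanuel (f : A →ₗ[R] M) (g : B →ₗ[R] M)
    (hA : Module.Projective R A) (hB : Module.Projective R B)
    (hf : Function.Surjective f) (hg : Function.Surjective g) :
    Nonempty ((↥(LinearMap.ker f) × B) ≃ₗ[R] (↥(LinearMap.ker g) × A)) := by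
  set φ : (A × B) →ₗ[R] M := f.comp (LinearMap.fst R A B) - g.comp (LinearMap.snd R A B) with hφ
  set X : Submodule R (A × B) := LinearMap.ker φ with hX
  have memX : ∀ p : A × B, p ∈ X ↔ f p.1 = g p.2 := by
    intro p
    simp [hX, hφ, LinearMap.mem_ker, sub_eq_zero]
  set π₁ : ↥X →ₗ[R] A := (LinearMap.fst R A B).comp X.subtype with hπ₁
  set π₂ : ↥X →ₗ[R] B := (LinearMap.snd R A B).comp X.subtype with hπ₂
  have hπ₁s : Function.Surjective π₁ := by
    intro a
    obtain ⟨b, hb⟩ := hg (f a)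
    exact ⟨⟨(a, b), (memX _).2 hb.symm⟩, rfl⟩
  have hπ₂s : Function.Surjective π₂ := by
    intro b
    obtain ⟨a, ha⟩ := hf (g b)
    exact ⟨⟨(a, b), (memX _).2 ha⟩, rfl⟩
  obtain ⟨s₁, hs₁⟩ := Module.projective_lifting_property π₁ LinearMap.id hπ₁s
  obtain ⟨s₂, hs₂⟩ := Module.projective_lifting_property π₂ LinearMap.id hπ₂s
  have e₂ : ↥(LinearMap.ker π₂) ≃ₗ[R] ↥(LinearMap.ker f) :=
    { toFun := fun x => ⟨x.val.val.1, by
        have hb : x.val.val.2 = 0 := x.2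
        have := (memX x.val.val).1 x.val.2
        rw [hb, map_zero] at this
        exact this⟩
      invFun := fun a => ⟨⟨(a.val, 0), (memX _).2 (by simp [a.2])⟩, by simp [hπ₂]⟩
      map_add' := fun x y => rfl
      map_smul' := fun r x => rfl
      left_inv := fun x => by
        have hb : x.val.val.2 = 0 := x.2
        ext
        · rfl
        · exact hb.symm
      right_inv := fun a => rfl }
  have e₁ : ↥(LinearMap.ker π₁) ≃ₗ[R] ↥(LinearMap.ker g) :=
    { toFun := fun x => ⟨x.val.val.2, by
        have hb : x.val.val.1 = 0 := x.2
        have := (memX x.val.val).1 x.val.2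
        rw [hb, map_zero] at this
        exact this.symm⟩
      invFun := fun b => ⟨⟨(0, b.val), (memX _).2 (by simp [b.2])⟩, by simp [hπ₁]⟩
      map_add' := fun x y => rfl
      map_smul' := fun r x => rfl
      left_inv := fun x => by
        have hb : x.val.val.1 = 0 := x.2
        ext
        · exact hb.symm
        · rfl
      right_inv := fun b => rfl }
  exact ⟨(LinearEquiv.prodCongr e₂ (LinearEquiv.refl R B)).symm.trans
      ((splitEquiv π₂ s₂ hs₂).symm.trans ((splitEquiv π₁ s₁ hs₁).trans
        (LinearEquiv.prodCongr e₁ (LinearEquiv.refl R A))))⟩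

variable {N : Type} [AddCommGroup N] [Module R N]

/-- Kernel of `f × id` is the kernel of `f`. -/
noncomputable def kerProdMapIdEquiv (f : A →ₗ[R] M) :
    ↥(LinearMap.ker (f.prodMap (LinearMap.id : B →ₗ[R] B))) ≃ₗ[R] ↥(LinearMap.ker f) where
  toFun x := ⟨x.val.1, by
    have := x.2
    rw [LinearMap.mem_ker] at this
    exact congrArg Prod.fst this⟩
  invFun a := ⟨(a.val, 0), by
    have := a.2
    rw [LinearMap.mem_ker] at this ⊢
    exact Prod.ext this rfl⟩
  map_add' x y := rfl
  map_smul' r x := rfl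
  left_inv x := by
    have := x.2
    rw [LinearMap.mem_ker] at this
    have h2 : x.val.2 = 0 := congrArg Prod.snd this
    ext
    · rfl
    · exact h2.symm
  right_inv a := rfl

end Schanuel

/-! ### The trivial `ℤΓ`-module `ℤ` -/

/-- The augmentation ring homomorphism `ℤΓ → ℤ`. -/
noncomputable def augRingHom (Γ : Type) [Group Γ] : GrpRing Γ →+* ℤ :=
  ((MonoidAlgebra.lift ℤ ℤ Γ) 1).toRingHom

@[simp] lemma augRingHom_single (Γ : Type) [Group Γ] (g : Γ) (a : ℤ) :
    augRingHom Γ (single g a) = a := by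
  simp [augRingHom, MonoidAlgebra.lift_single]

/-- `ℤ` as a trivial `ℤΓ`-module. -/
def TrivInt (Γ : Type) [Group Γ] : Type := ℤ

instance (Γ : Type) [Group Γ] : AddCommGroup (TrivInt Γ) := inferInstanceAs (AddCommGroup ℤ)
noncomputable instance (Γ : Type) [Group Γ] : Module (GrpRing Γ) (TrivInt Γ) :=
  Module.compHom ℤ (augRingHom Γ)

section Linearize
variable {Γ : Type} [Group Γ] {A : Type} [AddCommGroup A] [Module (GrpRing Γ) A]

/-- An equivariant additive map to `ℤ` is `ℤΓ`-linear into the trivial module. -/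
noncomputable def linearizeAug (φ : A →+ ℤ)
    (hφ : ∀ (g : Γ) (x : A), φ ((single g (1 : ℤ) : GrpRing Γ) • x) = φ x) :
    A →ₗ[GrpRing Γ] TrivInt Γ where
  toFun x := (φ x : TrivInt Γ)
  map_add' := φ.map_add
  map_smul' r x := by
    show (φ (r • x) : ℤ) = augRingHom Γ r * φ x
    induction r using MonoidAlgebra.induction_on with
    | of g =>
        have h1 : (MonoidAlgebra.of ℤ Γ g : GrpRing Γ) = single g (1 : ℤ) := rfl
        rw [h1, hφ g x]
        simp
    | add p q hp hq => rw [add_smul, φ.map_add, hp, hq, map_add, add_mul]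
    | smul a p hp =>
        rw [smul_assoc, map_zsmul φ, hp, map_zsmul (augRingHom Γ), smul_eq_mul, smul_eq_mul,
          mul_assoc]

lemma linearizeAug_surjective (φ : A →+ ℤ) (hφ) (h : Function.Surjective φ) :
    Function.Surjective (linearizeAug (Γ := Γ) φ hφ) := h

end Linearize

/-! ### Free towers -/

noncomputable section Tower
variable {R : Type} [Ring R] {M : Type} [AddCommGroup M] [Module R M]

/-- Iterated free modules surjecting onto successive kernels. -/
def towerStep (ι : Type) (v : ι → M) : ℕ → Σ X : Type, Submodule R (X →₀ R)
  | 0 => ⟨ι, LinearMap.ker (Finsupp.linearCombination R v)⟩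
  | n + 1 =>
      ⟨(towerStep ι v n).2, LinearMap.ker (Finsupp.linearCombination R
        (fun x : ↥(towerStep ι v n).2 => (x : (towerStep ι v n).1 →₀ R)))⟩

/-- The map from level `n+1` of the tower to level `n`. -/
def towerMap (ι : Type) (v : ι → M) (n : ℕ) :
    ((towerStep (R := R) ι v (n + 1)).1 →₀ R) →ₗ[R] ((towerStep (R := R) ι v n).1 →₀ R) :=
  Finsupp.linearCombination R (fun x : ↥(towerStep (R := R) ι v n).2 =>
    (x : (towerStep (R := R) ι v n).1 →₀ R))

lemma towerMap_range (ι : Type) (v : ι → M) (n : ℕ) :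
    LinearMap.range (towerMap (R := R) ι v n) = (towerStep (R := R) ι v n).2 := by
  rw [towerMap]; erw [Finsupp.range_linearCombination]
  have : (Set.range fun x : ↥(towerStep (R := R) ι v n).2 =>
      (x : (towerStep (R := R) ι v n).1 →₀ R)) = ((towerStep (R := R) ι v n).2 : Set _) :=
    Subtype.range_coe
  erw [this]
  exact Submodule.span_eq _

lemma towerMap_ker (ι : Type) (v : ι → M) (n : ℕ) :
    LinearMap.ker (towerMap (R := R) ι v n) = (towerStep (R := R) ι v (n + 1)).2 := rfl

end Tower

/-! ### Building a resolution from a partial one -/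

noncomputable section Build
variable (Γ : Type) [Group Γ]
variable (C0 C1 C2 : Type) [AddCommGroup C0] [AddCommGroup C1] [AddCommGroup C2]
  [Module (GrpRing Γ) C0] [Module (GrpRing Γ) C1] [Module (GrpRing Γ) C2]
variable (d0 : C1 →ₗ[GrpRing Γ] C0) (d1 : C2 →ₗ[GrpRing Γ] C1)
variable (ι : Type) (v : ι → C2)

def buildP : ℕ → Type
  | 0 => C0
  | 1 => C1
  | 2 => C2
  | (n+3) => ((towerStep (R := GrpRing Γ) ι v n).1 →₀ GrpRing Γ)

def buildP_acg : ∀ i, AddCommGroup (buildP Γ C0 C1 C2 ι v i)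
  | 0 => inferInstanceAs (AddCommGroup C0)
  | 1 => inferInstanceAs (AddCommGroup C1)
  | 2 => inferInstanceAs (AddCommGroup C2)
  | (n+3) => inferInstanceAs (AddCommGroup ((towerStep (R := GrpRing Γ) ι v n).1 →₀ GrpRing Γ))

def buildP_mod : ∀ i, @Module (GrpRing Γ) (buildP Γ C0 C1 C2 ι v i) _
    ((buildP_acg Γ C0 C1 C2 ι v i).toAddCommMonoid)
  | 0 => inferInstanceAs (Module (GrpRing Γ) C0)
  | 1 => inferInstanceAs (Module (GrpRing Γ) C1)
  | 2 => inferInstanceAs (Module (GrpRing Γ) C2)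
  | (n+3) =>
      inferInstanceAs (Module (GrpRing Γ) ((towerStep (R := GrpRing Γ) ι v n).1 →₀ GrpRing Γ))

attribute [local instance] buildP_acg buildP_mod

def buildD : ∀ i, buildP Γ C0 C1 C2 ι v (i+1) →ₗ[GrpRing Γ] buildP Γ C0 C1 C2 ι v i
  | 0 => d0
  | 1 => d1
  | 2 => Finsupp.linearCombination (GrpRing Γ) v
  | (n+3) => towerMap ι v n

lemma build_exact (hex0 : LinearMap.ker d0 = LinearMap.range d1)
    (hex1 : LinearMap.ker d1 = Submodule.span (GrpRing Γ) (Set.range v)) :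
    ∀ i, LinearMap.ker (buildD Γ C0 C1 C2 d0 d1 ι v i)
      = LinearMap.range (buildD Γ C0 C1 C2 d0 d1 ι v (i+1))
  | 0 => hex0
  | 1 => by
      show LinearMap.ker d1 = LinearMap.range (Finsupp.linearCombination (GrpRing Γ) v)
      rw [Finsupp.range_linearCombination]
      exact hex1
  | 2 => by
      show LinearMap.ker (Finsupp.linearCombination (GrpRing Γ) v)
        = LinearMap.range (towerMap ι v 0)
      rw [towerMap_range]
      rfl
  | (n+3) => by
      show LinearMap.ker (towerMap ι v n) = LinearMap.range (towerMap ι v (n+1))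
      rw [towerMap_range, towerMap_ker]

def build_proj [Module.Free (GrpRing Γ) C0] [Module.Free (GrpRing Γ) C1]
    [Module.Free (GrpRing Γ) C2] :
    ∀ i, Module.Projective (GrpRing Γ) (buildP Γ C0 C1 C2 ι v i)
  | 0 => inferInstanceAs (Module.Projective (GrpRing Γ) C0)
  | 1 => inferInstanceAs (Module.Projective (GrpRing Γ) C1)
  | 2 => inferInstanceAs (Module.Projective (GrpRing Γ) C2)
  | (n+3) => inferInstanceAs
      (Module.Projective (GrpRing Γ) ((towerStep (R := GrpRing Γ) ι v n).1 →₀ GrpRing Γ))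

/-- Build a full projective resolution out of an exact sequence
`C2 → C1 → C0 → ℤ → 0` together with generators `v` of `ker d1`. -/
noncomputable def buildRes [Module.Free (GrpRing Γ) C0] [Module.Free (GrpRing Γ) C1]
    [Module.Free (GrpRing Γ) C2]
    (ε : C0 →+ ℤ)
    (hεe : ∀ (g : Γ) (x : C0), ε ((single g (1 : ℤ) : GrpRing Γ) • x) = ε x)
    (hεs : Function.Surjective ε)
    (hεk : ∀ x : C0, ε x = 0 ↔ x ∈ LinearMap.range d0)
    (hex0 : LinearMap.ker d0 = LinearMap.range d1)
    (hex1 : LinearMap.ker d1 = Submodule.span (GrpRing Γ) (Set.range v)) :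
    ProjResolution Γ where
  P := buildP Γ C0 C1 C2 ι v
  acg := buildP_acg Γ C0 C1 C2 ι v
  mod := buildP_mod Γ C0 C1 C2 ι v
  dP := buildD Γ C0 C1 C2 d0 d1 ι v
  aug := ε
  proj := build_proj Γ C0 C1 C2 ι v
  aug_equivariant := hεe
  aug_surjective := hεs
  exact_aug := hεk
  exact := build_exact Γ C0 C1 C2 d0 d1 ι v hex0 hex1

end Build

/-- **(Lemma 2.4.)**  Let `M` be a connected CW-complex with fundamental group `Γ` and
finite 3-skeleton, modelled by the cellular chain complex `C` of its universal cover over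
`Λ = ℤΓ` (free `Λ`-modules, finitely generated in degrees `≤ 3`).  Then `π₂(M) = H₂(C)` is
finitely generated as a `Λ`-module if and only if `Γ` is of type `FP₃`. -/
theorem pi2_finitely_generated_iff_FP3
    (Γ : Type) [Group Γ]
    (C : ℕ → Type) [∀ i, AddCommGroup (C i)] [∀ i, Module (GrpRing Γ) (C i)]
    (d : ∀ i, C (i + 1) →ₗ[GrpRing Γ] C i)
    (hdd : ∀ i, (d i).comp (d (i + 1)) = 0)
    (hfree : ∀ i, Module.Free (GrpRing Γ) (C i))
    -- the 3-skeleton of `M` is finite: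
    (hfg3 : ∀ i ≤ 3, Module.Finite (GrpRing Γ) (C i))
    (ε : C 0 →+ ℤ)
    (hεequiv : ∀ (g : Γ) (x : C 0), ε ((single g (1 : ℤ) : GrpRing Γ) • x) = ε x)
    (hεsurj : Function.Surjective ε)
    (hεker : ∀ x : C 0, ε x = 0 ↔ ∃ y, d 0 y = x)
    (hH1 : ∀ x : C 1, d 0 x = 0 → ∃ y, d 1 y = x)
    :
    Module.Finite (GrpRing Γ) (pi2Model Γ C d) ↔ IsFP3 Γ := by
  classical
  set Λ := GrpRing Γ
  set K : Submodule Λ (C 2) := LinearMap.ker (d 1) with hK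
  set N : Submodule Λ ↥K := Submodule.comap K.subtype (LinearMap.range (d 2)) with hN
  haveI : ∀ i, Module.Free Λ (C i) := hfree
  haveI hf0 : Module.Finite Λ (C 0) := hfg3 0 (by norm_num)
  haveI hf1 : Module.Finite Λ (C 1) := hfg3 1 (by norm_num)
  haveI hf2 : Module.Finite Λ (C 2) := hfg3 2 (by norm_num)
  haveI hf3 : Module.Finite Λ (C 3) := hfg3 3 (by norm_num)
  -- `N` is finitely generated
  have hd2K : ∀ x : C 3, d 2 x ∈ K := by
    intro x
    have := congrArg (fun f => f x) (congrArg DFunLike.coe (hdd 1))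
    exact this
  have hNfg : N.FG := by
    have h1 : (LinearMap.range (LinearMap.codRestrict K (d 2) hd2K)).FG :=
      Module.Finite.iff_fg.mp (Module.Finite.range _)
    rwa [LinearMap.range_codRestrict] at h1
  -- the exactness of the bottom of `C`
  have hex0 : LinearMap.ker (d 0) = LinearMap.range (d 1) := by
    apply le_antisymm
    · intro x hx
      exact hH1 x hx
    · rintro x ⟨y, rfl⟩
      have := congrArg (fun f => f y) (congrArg DFunLike.coe (hdd 0))
      exact this
  constructor
  · -- `π₂` f.g. ⇒ `FP₃`
    intro hpi2
    -- `K` is finitely generated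
    have hKfg : K.FG := by
      rw [← Module.Finite.iff_fg]
      rw [Module.finite_def]
      apply Submodule.fg_of_fg_map_of_fg_inf_ker N.mkQ
      · rw [Submodule.map_top, Submodule.range_mkQ]
        exact Module.finite_def.mp hpi2
      · rw [top_inf_eq, Submodule.ker_mkQ]
        exact hNfg
    obtain ⟨S, hS⟩ := hKfg
    have hspan : LinearMap.ker (d 1)
        = Submodule.span Λ (Set.range (fun x : ↥(S : Set (C 2)) => (x : C 2))) := by
      rw [Subtype.range_coe]
      exact hS.symm
    refine ⟨buildRes Γ (C 0) (C 1) (C 2) (d 0) (d 1) (↥(S : Set (C 2)))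
        (fun x => (x : C 2)) ε hεequiv hεsurj
        (fun x => (hεker x).trans (by rw [LinearMap.mem_range]))
        hex0 hspan, ?_⟩
    intro i hi
    interval_cases i
    · exact hfg3 0 (by norm_num)
    · exact hfg3 1 (by norm_num)
    · exact hfg3 2 (by norm_num)
    · haveI : Fintype ↥(S : Set (C 2)) := FinsetCoe.fintype S
      exact inferInstanceAs (Module.Finite Λ (↥(S : Set (C 2)) →₀ Λ))
  · -- `FP₃` ⇒ `π₂` f.g.
    intro hFP3
    obtain ⟨Pres, hPfin⟩ := hFP3
    haveI hp0 : Module.Finite Λ (Pres.P 0) := hPfin 0 (by norm_num)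
    haveI hp1 : Module.Finite Λ (Pres.P 1) := hPfin 1 (by norm_num)
    haveI hp2 : Module.Finite Λ (Pres.P 2) := hPfin 2 (by norm_num)
    haveI hp3 : Module.Finite Λ (Pres.P 3) := hPfin 3 (by norm_num)
    -- linearized augmentations
    set εl : C 0 →ₗ[Λ] TrivInt Γ := linearizeAug ε hεequiv with hεl
    set αl : Pres.P 0 →ₗ[Λ] TrivInt Γ := linearizeAug Pres.aug Pres.aug_equivariant with hαl
    have hεls : Function.Surjective εl := hεsurj
    have hαls : Function.Surjective αl := Pres.aug_surjective
    -- Step 0 of Schanuel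
    haveI := Pres.proj 0
    haveI := Pres.proj 1
    haveI := Pres.proj 2
    haveI : Module.Projective Λ (C 0) := inferInstance
    haveI : Module.Projective Λ (C 1) := inferInstance
    haveI : Module.Projective Λ (C 2) := inferInstance
    obtain ⟨e0⟩ := schanuel εl αl inferInstance (Pres.proj 0) hεls hαls
    -- Step 1
    have hd0mem : ∀ x : C 1, d 0 x ∈ LinearMap.ker εl := by
      intro x
      show εl (d 0 x) = 0
      exact (hεker (d 0 x)).mpr ⟨x, rfl⟩
    set d0' : C 1 →ₗ[Λ] ↥(LinearMap.ker εl) :=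
      LinearMap.codRestrict _ (d 0) hd0mem with hd0'
    have hd0's : Function.Surjective d0' := by
      rintro ⟨y, hy⟩
      obtain ⟨x, hx⟩ := (hεker y).mp hy
      exact ⟨x, Subtype.ext hx⟩
    have hdP0mem : ∀ x : Pres.P 1, Pres.dP 0 x ∈ LinearMap.ker αl := by
      intro x
      show αl (Pres.dP 0 x) = 0
      exact (Pres.exact_aug (Pres.dP 0 x)).mpr ⟨x, rfl⟩
    set dP0' : Pres.P 1 →ₗ[Λ] ↥(LinearMap.ker αl) :=
      LinearMap.codRestrict _ (Pres.dP 0) hdP0mem with hdP0'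
    have hdP0's : Function.Surjective dP0' := by
      rintro ⟨y, hy⟩
      obtain ⟨x, hx⟩ := (Pres.exact_aug y).mp hy
      exact ⟨x, Subtype.ext hx⟩
    set f1 : (C 1 × Pres.P 0) →ₗ[Λ] (↥(LinearMap.ker εl) × Pres.P 0) :=
      d0'.prodMap LinearMap.id with hf1
    set g1 : (Pres.P 1 × C 0) →ₗ[Λ] (↥(LinearMap.ker αl) × C 0) :=
      dP0'.prodMap LinearMap.id with hg1
    set g1' : (Pres.P 1 × C 0) →ₗ[Λ] (↥(LinearMap.ker εl) × Pres.P 0) :=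
      (e0.symm : (↥(LinearMap.ker αl) × C 0) ≃ₗ[Λ] _).toLinearMap.comp g1 with hg1'
    have hf1s : Function.Surjective f1 := hd0's.prodMap Function.surjective_id
    have hg1s : Function.Surjective g1 := hdP0's.prodMap Function.surjective_id
    have hg1's : Function.Surjective g1' := e0.symm.surjective.comp hg1s
    obtain ⟨e1pre⟩ := schanuel f1 g1'
      (inferInstanceAs (Module.Projective Λ (C 1 × Pres.P 0)))
      (inferInstanceAs (Module.Projective Λ (Pres.P 1 × C 0))) hf1s hg1's
    -- identify the kernels
    have hkerg1' : LinearMap.ker g1' = LinearMap.ker g1 := LinearEquiv.ker_comp _ _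
    have hkerf1 : ↥(LinearMap.ker f1) ≃ₗ[Λ] ↥(LinearMap.ker (d 0)) :=
      (kerProdMapIdEquiv d0').trans (LinearEquiv.ofEq _ _ (LinearMap.ker_codRestrict _ _ _))
    have hkerg1 : ↥(LinearMap.ker g1') ≃ₗ[Λ] ↥(LinearMap.ker (Pres.dP 0)) :=
      (LinearEquiv.ofEq _ _ hkerg1').trans ((kerProdMapIdEquiv dP0').trans
        (LinearEquiv.ofEq _ _ (LinearMap.ker_codRestrict _ _ _)))
    have e1 : (↥(LinearMap.ker (d 0)) × (Pres.P 1 × C 0)) ≃ₗ[Λ]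
        (↥(LinearMap.ker (Pres.dP 0)) × (C 1 × Pres.P 0)) :=
      ((LinearEquiv.prodCongr hkerf1 (LinearEquiv.refl Λ _)).symm.trans e1pre).trans
        (LinearEquiv.prodCongr hkerg1 (LinearEquiv.refl Λ _))
    -- Step 2
    have hd1mem : ∀ x : C 2, d 1 x ∈ LinearMap.ker (d 0) := by
      intro x
      have := congrArg (fun f => f x) (congrArg DFunLike.coe (hdd 0))
      exact this
    set d1' : C 2 →ₗ[Λ] ↥(LinearMap.ker (d 0)) :=
      LinearMap.codRestrict _ (d 1) hd1mem with hd1'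
    have hd1's : Function.Surjective d1' := by
      rintro ⟨y, hy⟩
      obtain ⟨x, hx⟩ := hH1 y hy
      exact ⟨x, Subtype.ext hx⟩
    have hdP1mem : ∀ x : Pres.P 2, Pres.dP 1 x ∈ LinearMap.ker (Pres.dP 0) := by
      intro x
      rw [Pres.exact 0]
      exact ⟨x, rfl⟩
    set dP1' : Pres.P 2 →ₗ[Λ] ↥(LinearMap.ker (Pres.dP 0)) :=
      LinearMap.codRestrict _ (Pres.dP 1) hdP1mem with hdP1'
    have hdP1's : Function.Surjective dP1' := by
      rintro ⟨y, hy⟩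
      rw [Pres.exact 0] at hy
      obtain ⟨x, hx⟩ := hy
      exact ⟨x, Subtype.ext hx⟩
    set f2 : (C 2 × (Pres.P 1 × C 0)) →ₗ[Λ]
        (↥(LinearMap.ker (d 0)) × (Pres.P 1 × C 0)) := d1'.prodMap LinearMap.id with hf2
    set g2 : (Pres.P 2 × (C 1 × Pres.P 0)) →ₗ[Λ]
        (↥(LinearMap.ker (Pres.dP 0)) × (C 1 × Pres.P 0)) :=
      dP1'.prodMap LinearMap.id with hg2
    set g2' : (Pres.P 2 × (C 1 × Pres.P 0)) →ₗ[Λ]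
        (↥(LinearMap.ker (d 0)) × (Pres.P 1 × C 0)) :=
      (e1.symm : _ ≃ₗ[Λ] _).toLinearMap.comp g2 with hg2'
    have hf2s : Function.Surjective f2 := hd1's.prodMap Function.surjective_id
    have hg2s : Function.Surjective g2 := hdP1's.prodMap Function.surjective_id
    have hg2's : Function.Surjective g2' := e1.symm.surjective.comp hg2s
    obtain ⟨e2pre⟩ := schanuel f2 g2'
      (inferInstanceAs (Module.Projective Λ (C 2 × (Pres.P 1 × C 0))))
      (inferInstanceAs (Module.Projective Λ (Pres.P 2 × (C 1 × Pres.P 0)))) hf2s hg2's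
    have hkerg2' : LinearMap.ker g2' = LinearMap.ker g2 := LinearEquiv.ker_comp _ _
    have hkerf2 : ↥(LinearMap.ker f2) ≃ₗ[Λ] ↥K :=
      (kerProdMapIdEquiv d1').trans (LinearEquiv.ofEq _ _ (LinearMap.ker_codRestrict _ _ _))
    have hkerg2 : ↥(LinearMap.ker g2') ≃ₗ[Λ] ↥(LinearMap.ker (Pres.dP 1)) :=
      (LinearEquiv.ofEq _ _ hkerg2').trans ((kerProdMapIdEquiv dP1').trans
        (LinearEquiv.ofEq _ _ (LinearMap.ker_codRestrict _ _ _)))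
    -- finiteness of `ker (Pres.dP 1)`
    haveI hfinker : Module.Finite Λ ↥(LinearMap.ker (Pres.dP 1)) := by
      rw [Module.Finite.iff_fg, Pres.exact 1, ← Module.Finite.iff_fg]
      exact Module.Finite.range (Pres.dP 2)
    -- finiteness of the right side
    haveI : Module.Finite Λ ↥(LinearMap.ker g2') := Module.Finite.equiv hkerg2.symm
    haveI : Module.Finite Λ
        (↥(LinearMap.ker g2') × (C 2 × (Pres.P 1 × C 0))) := by infer_instance
    haveI hfinL : Module.Finite Λ (↥(LinearMap.ker f2) × (Pres.P 2 × (C 1 × Pres.P 0))) :=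
      Module.Finite.equiv e2pre.symm
    haveI : Module.Finite Λ ↥(LinearMap.ker f2) :=
      Module.Finite.of_surjective
        (LinearMap.fst Λ ↥(LinearMap.ker f2) (Pres.P 2 × (C 1 × Pres.P 0))) Prod.fst_surjective
    haveI hKfin : Module.Finite Λ ↥K := Module.Finite.equiv hkerf2
    exact Module.Finite.of_surjective N.mkQ (Submodule.mkQ_surjective N)
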